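/- arXiv:1905.12909 — 5 statements merged into one kernel-verified Lean document; each statement's English description precedes it below -/
import Mathlib

section
/- Let K ≥ 1, n ≥ 1, let F be a K×n real matrix with strictly positive entries whose columns each lie in the probability simplex Δ_K, let z ∈ Δ_K have strictly positive entries, let 0 < α < 1 and ε > 0, and set C = -log F entrywise, M = F^{1/ε} entrywise and τ = (1 + αε/(1-α))^{-1}. Suppose U* minimizes the objective G(U) = (α/n)(⟨C,U⟩ - ε H(U)) + (1-α) KL(U·1_n/n ∣ z) over the set of K×n matrices with nonnegative entries and each column in Δ_K, and suppose U* has strictly positive entries. Then there exist vectors a ∈ ℝ^K and b ∈ ℝ^n with strictly positive entries such that U* = diag(a)·M·diag(b), a = (n z ⊘ (M b))^τ (entrywise), and b = 1_n ⊘ (Mᵀ a) (entrywise). -/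
/-- Frobenius inner product of two `K × n` real matrices. -/
noncomputable def frob {K n : ℕ} (C U : Fin K → Fin n → ℝ) : ℝ :=
  ∑ i, ∑ j, C i j * U i j

/-- Entropy of a nonnegative matrix, `H(U) = -∑ U_ij (log U_ij - 1)`
(the convention `0 · (log 0 - 1) = 0` holds since `Real.log 0 = 0`). -/
noncomputable def matEnt {K n : ℕ} (U : Fin K → Fin n → ℝ) : ℝ :=
  -∑ i, ∑ j, U i j * (Real.log (U i j) - 1)

/-- Generalized Kullback-Leibler divergence between nonnegative vectors
(the convention `0 · log 0 = 0` holds since `Real.log 0 = 0`). -/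
noncomputable def klv {K : ℕ} (a b : Fin K → ℝ) : ℝ :=
  ∑ i, (a i * Real.log (a i / b i) - a i + b i)

/-- The entropic unbalanced OT objective
`G(U) = (α/n)(⟨C,U⟩ - ε H(U)) + (1-α) KL(U·1_n/n ∣ z)`. -/
noncomputable def objG {K n : ℕ} (C : Fin K → Fin n → ℝ) (z : Fin K → ℝ) (α ε : ℝ)
    (U : Fin K → Fin n → ℝ) : ℝ :=
  α / n * (frob C U - ε * matEnt U) + (1 - α) * klv (fun i => (∑ j, U i j) / n) z

/-- `U` is a nonnegative matrix each of whose columns lies in the simplex `Δ_K`. -/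
def colSimplex {K n : ℕ} (U : Fin K → Fin n → ℝ) : Prop :=
  (∀ i j, 0 ≤ U i j) ∧ ∀ j, ∑ i, U i j = 1

lemma affAt {a d : ℝ} : HasDerivAt (fun t : ℝ => a + t * d) d 0 := by
  simpa using ((hasDerivAt_id (0:ℝ)).mul_const d).const_add a

lemma sum_ite_pair {K n : ℕ} (i1 : Fin K) (j0 : Fin n) (X : Fin K → Fin n → ℝ) :
    ∑ i, ∑ j, (if i = i1 ∧ j = j0 then X i j else 0) = X i1 j0 := by
  rw [Finset.sum_eq_single i1]
  · simp
  · intro b _ hb; simp [hb]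
  · simp

lemma objG_hasDerivAt {K n : ℕ} (hn : 0 < n) (C : Fin K → Fin n → ℝ) (z : Fin K → ℝ)
    (hz : ∀ i, 0 < z i) (α ε : ℝ)
    (U D : Fin K → Fin n → ℝ) (hU : ∀ i j, 0 < U i j) :
    HasDerivAt (fun t => objG C z α ε (fun i j => U i j + t * D i j))
      (α / n * ((∑ i, ∑ j, C i j * D i j) + ε * ∑ i, ∑ j, D i j * Real.log (U i j))
        + (1 - α) * ∑ i, (∑ j, D i j) / n * Real.log ((∑ j, U i j) / ((n:ℝ) * z i))) 0 := by
  have hnR : (0:ℝ) < n := by exact_mod_cast hn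
  have : Nonempty (Fin n) := ⟨⟨0, hn⟩⟩
  have haff : ∀ i j, HasDerivAt (fun t : ℝ => U i j + t * D i j) (D i j) 0 := fun i j => affAt
  have hfrob : HasDerivAt (fun t => frob C (fun i j => U i j + t * D i j))
      (∑ i, ∑ j, C i j * D i j) 0 := by
    unfold frob
    exact HasDerivAt.fun_sum fun i _ => HasDerivAt.fun_sum fun j _ => (haff i j).const_mul _
  have hent : HasDerivAt (fun t => matEnt (fun i j => U i j + t * D i j))
      (-∑ i, ∑ j, D i j * Real.log (U i j)) 0 := by
    unfold matEnt
    apply HasDerivAt.neg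
    apply HasDerivAt.fun_sum; intro i _; apply HasDerivAt.fun_sum; intro j _
    have h0 : U i j + (0:ℝ) * D i j = U i j := by ring
    have hne : U i j + (0:ℝ) * D i j ≠ 0 := by rw [h0]; exact (hU i j).ne'
    have hlog := ((haff i j).log hne).sub_const 1
    have hm := (haff i j).fun_mul hlog
    convert hm using 1
    · rfl
    rw [h0, mul_div_cancel₀ (D i j) (hU i j).ne']
    ring
  have hklv : HasDerivAt (fun t => klv (fun i => (∑ j, (U i j + t * D i j)) / n) z)
      (∑ i, (∑ j, D i j) / n * Real.log ((∑ j, U i j) / ((n:ℝ) * z i))) 0 := by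
    unfold klv
    apply HasDerivAt.fun_sum; intro i _
    have hr : 0 < ∑ j, U i j := Finset.sum_pos (fun j _ => hU i j) Finset.univ_nonempty
    have hsum : HasDerivAt (fun t => ∑ j, (U i j + t * D i j)) (∑ j, D i j) 0 :=
      HasDerivAt.fun_sum fun j _ => haff i j
    have hf := hsum.div_const (n:ℝ)
    have hq := hf.div_const (z i)
    have h0 : ∑ j, (U i j + (0:ℝ) * D i j) = ∑ j, U i j := by simp
    have hne : ((∑ j, (U i j + (0:ℝ) * D i j)) / (n:ℝ)) / z i ≠ 0 := by
      rw [h0]; exact div_ne_zero (div_ne_zero hr.ne' hnR.ne') (hz i).ne'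
    have hlog := hq.log hne
    have hterm := ((hf.fun_mul hlog).fun_sub hf).add_const (z i)
    convert hterm using 1
    rw [h0, div_div]
    have hzi := (hz i).ne'
    field_simp
    ring
  have hcomb := ((hfrob.fun_sub (hent.const_mul ε)).const_mul (α / (n:ℝ))).fun_add
    (hklv.const_mul (1 - α))
  convert hcomb using 1
  · rfl
  · rfl
  · rfl
  ring

/-- Proposition 1: the minimizer of the entropic unbalanced OT objective has the form
`U* = diag(a) M diag(b)` with `a = (nz ⊘ Mb)^τ` and `b = 1_n ⊘ Mᵀa`. -/
theorem sinkhorn_fixed_point_of_minimizer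
    {K n : ℕ} (hK : 1 ≤ K) (hn : 1 ≤ n)
    (F : Fin K → Fin n → ℝ) (hFpos : ∀ i j, 0 < F i j)
    (hFcol : ∀ j, ∑ i, F i j = 1)
    (z : Fin K → ℝ) (hzpos : ∀ i, 0 < z i) (hzsum : ∑ i, z i = 1)
    (α ε : ℝ) (hα0 : 0 < α) (hα1 : α < 1) (hε : 0 < ε)
    (C : Fin K → Fin n → ℝ) (hC : ∀ i j, C i j = -Real.log (F i j))
    (M : Fin K → Fin n → ℝ) (hM : ∀ i j, M i j = F i j ^ (1 / ε))
    (τ : ℝ) (hτ : τ = (1 + α * ε / (1 - α))⁻¹)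
    (Ustar : Fin K → Fin n → ℝ)
    (hUfeas : colSimplex Ustar)
    (hUpos : ∀ i j, 0 < Ustar i j)
    (hUmin : ∀ V : Fin K → Fin n → ℝ, colSimplex V →
      objG C z α ε Ustar ≤ objG C z α ε V) :
    ∃ (a : Fin K → ℝ) (b : Fin n → ℝ),
      (∀ i, 0 < a i) ∧ (∀ j, 0 < b j) ∧
      (∀ i j, Ustar i j = a i * M i j * b j) ∧
      (∀ i, a i = ((n : ℝ) * z i / (∑ j, M i j * b j)) ^ τ) ∧
      (∀ j, b j = (∑ i, M i j * a i)⁻¹) := by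
  have hnR : (0:ℝ) < n := by exact_mod_cast hn
  have hNE : Nonempty (Fin n) := ⟨⟨0, hn⟩⟩
  have hαε : 0 < α * ε := mul_pos hα0 hε
  have h1α : 0 < 1 - α := by linarith
  set r : Fin K → ℝ := fun i => ∑ j, Ustar i j with hrdef
  have hrpos : ∀ i, 0 < r i := fun i =>
    Finset.sum_pos (fun j _ => hUpos i j) Finset.univ_nonempty
  set g : Fin K → Fin n → ℝ := fun i j =>
    α * (C i j + ε * Real.log (Ustar i j)) + (1 - α) * Real.log (r i / ((n:ℝ) * z i))
    with hgdef
  -- stationarity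
  have hstat : ∀ (j0 : Fin n) (i1 i2 : Fin K), g i1 j0 = g i2 j0 := by
    intro j0 i1 i2
    rcases eq_or_ne i1 i2 with h | hne12
    · rw [h]
    set D : Fin K → Fin n → ℝ := fun i j =>
      (if i = i1 ∧ j = j0 then (1:ℝ) else 0) - (if i = i2 ∧ j = j0 then (1:ℝ) else 0)
      with hDdef
    have hderiv := objG_hasDerivAt (by omega) C z hzpos α ε Ustar D hUpos
    have hDrow : ∀ i, ∑ j, D i j = (if i = i1 then 1 else 0) - (if i = i2 then 1 else 0) := by
      intro i
      rw [hDdef]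
      rw [Finset.sum_sub_distrib]
      congr 1
      · by_cases h : i = i1 <;> simp [h]
      · by_cases h : i = i2 <;> simp [h]
    have hDcol : ∀ j, ∑ i, D i j = 0 := by
      intro j
      rw [hDdef, Finset.sum_sub_distrib]
      have h1 : ∀ (i1 : Fin K), (∑ i, (if i = i1 ∧ j = j0 then (1:ℝ) else 0))
          = if j = j0 then 1 else 0 := by
        intro i1
        by_cases h : j = j0 <;> simp [h]
      rw [h1 i1, h1 i2, sub_self]
    have hloc : IsLocalMin (fun t => objG C z α ε (fun i j => Ustar i j + t * D i j)) 0 := by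
      have hδ : 0 < min (Ustar i1 j0) (Ustar i2 j0) := lt_min (hUpos i1 j0) (hUpos i2 j0)
      filter_upwards [Metric.ball_mem_nhds (0:ℝ) hδ] with t ht
      have ht' : |t| < min (Ustar i1 j0) (Ustar i2 j0) := by
        simpa [Real.dist_eq] using ht
      rcases abs_lt.mp ht' with ⟨htl, htr⟩
      have hml := min_le_left (Ustar i1 j0) (Ustar i2 j0)
      have hmr := min_le_right (Ustar i1 j0) (Ustar i2 j0)
      have hfeas : colSimplex (fun i j => Ustar i j + t * D i j) := by
        constructor
        · intro i j
          by_cases h1 : i = i1 ∧ j = j0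
          · obtain ⟨hi, hj⟩ := h1; subst hi; subst hj
            have hd : D i j = 1 := by simp [hDdef, hne12]
            dsimp only; rw [hd]; linarith
          · by_cases h2 : i = i2 ∧ j = j0
            · obtain ⟨hi, hj⟩ := h2; subst hi; subst hj
              have hd : D i j = -1 := by simp [hDdef, hne12, Ne.symm hne12]
              dsimp only; rw [hd]; linarith
            · have hd : D i j = 0 := by simp [hDdef, h1, h2]
              dsimp only; rw [hd]; have := hUpos i j; linarith
        · intro j
          rw [Finset.sum_add_distrib, ← Finset.mul_sum, hDcol j, mul_zero, add_zero]
          exact hUfeas.2 j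
      have h0 : (fun (i : Fin K) (j : Fin n) => Ustar i j + (0:ℝ) * D i j) = Ustar := by
        funext i j; ring
      show objG C z α ε (fun i j => Ustar i j + (0:ℝ) * D i j)
        ≤ objG C z α ε (fun i j => Ustar i j + t * D i j)
      rw [h0]
      exact hUmin _ hfeas
    have hzero := hloc.hasDerivAt_eq_zero hderiv
    -- compute the sums
    have hS1 : ∑ i, ∑ j, C i j * D i j = C i1 j0 - C i2 j0 := by
      simp only [hDdef, mul_sub, mul_ite, mul_one, mul_zero, Finset.sum_sub_distrib]
      rw [sum_ite_pair, sum_ite_pair]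
    have hS2 : ∑ i, ∑ j, D i j * Real.log (Ustar i j)
        = Real.log (Ustar i1 j0) - Real.log (Ustar i2 j0) := by
      simp only [hDdef, sub_mul, ite_mul, one_mul, zero_mul, Finset.sum_sub_distrib]
      rw [sum_ite_pair, sum_ite_pair]
    have hS3 : ∑ i, (∑ j, D i j) / (n:ℝ) * Real.log ((∑ j, Ustar i j) / ((n:ℝ) * z i))
        = Real.log (r i1 / ((n:ℝ) * z i1)) / n - Real.log (r i2 / ((n:ℝ) * z i2)) / n := by
      have : ∀ i, (∑ j, D i j) / (n:ℝ) * Real.log ((∑ j, Ustar i j) / ((n:ℝ) * z i))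
          = (if i = i1 then Real.log (r i / ((n:ℝ) * z i)) / n else 0)
            - (if i = i2 then Real.log (r i / ((n:ℝ) * z i)) / n else 0) := by
        intro i
        rw [hDrow i, hrdef]
        split_ifs <;> ring
      rw [Finset.sum_congr rfl (fun i _ => this i), Finset.sum_sub_distrib]
      simp
    rw [hS1, hS2, hS3] at hzero
    have hgoal : g i1 j0 - g i2 j0 = (n:ℝ) *
        (α / n * (C i1 j0 - C i2 j0 + ε * (Real.log (Ustar i1 j0) - Real.log (Ustar i2 j0)))
          + (1 - α) * (Real.log (r i1 / ((n:ℝ) * z i1)) / n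
            - Real.log (r i2 / ((n:ℝ) * z i2)) / n)) := by
      rw [hgdef]
      field_simp
      ring
    rw [hzero, mul_zero] at hgoal
    linarith [hgoal]
  -- algebra
  have hMpos : ∀ i j, 0 < M i j := fun i j => by
    rw [hM]; exact Real.rpow_pos_of_pos (hFpos i j) _
  set i0 : Fin K := ⟨0, hK⟩ with hi0
  set s : ℝ := (1 - α) / (α * ε) with hsdef
  set a : Fin K → ℝ := fun i => Real.exp (s * Real.log ((n:ℝ) * z i / r i)) with hadef
  set b : Fin n → ℝ := fun j => Real.exp (g i0 j / (α * ε)) with hbdef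
  have hapos : ∀ i, 0 < a i := fun i => Real.exp_pos _
  have hbpos : ∀ j, 0 < b j := fun j => Real.exp_pos _
  have hnzpos : ∀ i, (0:ℝ) < (n:ℝ) * z i := fun i => mul_pos hnR (hzpos i)
  have hlogr : ∀ i, Real.log (r i / ((n:ℝ) * z i))
      = Real.log (r i) - Real.log ((n:ℝ) * z i) :=
    fun i => Real.log_div (hrpos i).ne' (hnzpos i).ne'
  have hab : ∀ i j, Ustar i j = a i * M i j * b j := by
    intro i j
    have hgi : α * (C i j + ε * Real.log (Ustar i j))
        + (1 - α) * Real.log (r i / ((n:ℝ) * z i)) = g i0 j := by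
      conv_rhs => rw [← hstat j i i0]
    rw [hC i j, hlogr i] at hgi
    have hlogU : Real.log (Ustar i j) = (g i0 j + α * Real.log (F i j)
        - (1 - α) * (Real.log (r i) - Real.log ((n:ℝ) * z i))) / (α * ε) := by
      rw [eq_div_iff hαε.ne']
      linear_combination hgi
    rw [hM, Real.rpow_def_of_pos (hFpos i j), hadef, hbdef]
    dsimp only
    rw [← Real.exp_add, ← Real.exp_add, ← Real.exp_log (hUpos i j)]
    congr 1
    rw [hlogU, hsdef, Real.log_div (hnzpos i).ne' (hrpos i).ne']
    field_simp
    ring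
  have hbeq : ∀ j, b j = (∑ i, M i j * a i)⁻¹ := by
    intro j
    have h1 : (∑ i, M i j * a i) * b j = 1 := by
      rw [Finset.sum_mul, ← hUfeas.2 j]
      exact Finset.sum_congr rfl fun i _ => by rw [hab i j]; ring
    exact eq_inv_of_mul_eq_one_right h1
  have hQpos : ∀ i, 0 < ∑ j, M i j * b j := fun i =>
    Finset.sum_pos (fun j _ => mul_pos (hMpos i j) (hbpos j)) Finset.univ_nonempty
  have hden : (0:ℝ) < 1 - α + α * ε := by linarith
  have hτ' : τ = (1 - α) / (1 - α + α * ε) := by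
    rw [hτ, show 1 + α * ε / (1 - α) = (1 - α + α * ε) / (1 - α) by field_simp, inv_div]
  have haeq : ∀ i, a i = ((n:ℝ) * z i / (∑ j, M i j * b j)) ^ τ := by
    intro i
    have hrQ : r i = a i * ∑ j, M i j * b j := by
      rw [hrdef]
      dsimp only
      rw [Finset.mul_sum]
      exact Finset.sum_congr rfl fun j _ => by rw [hab i j]; ring
    have hla : Real.log (a i) = s * Real.log ((n:ℝ) * z i / r i) := Real.log_exp _
    rw [hrQ, Real.log_div (hnzpos i).ne' (mul_pos (hapos i) (hQpos i)).ne',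
      Real.log_mul (hapos i).ne' (hQpos i).ne', hsdef] at hla
    rw [div_mul_eq_mul_div, eq_div_iff hαε.ne'] at hla
    have key : Real.log (a i) = ((1 - α) * (Real.log ((n:ℝ) * z i)
        - Real.log (∑ j, M i j * b j))) / (1 - α + α * ε) := by
      rw [eq_div_iff hden.ne']
      linear_combination hla
    rw [Real.rpow_def_of_pos (div_pos (hnzpos i) (hQpos i))]
    conv_lhs => rw [← Real.exp_log (hapos i)]
    congr 1
    rw [Real.log_div (hnzpos i).ne' (hQpos i).ne', key, hτ']
    ring
  exact ⟨a, b, hapos, hbpos, hab, haeq, hbeq⟩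
end

section
/- Let K ≥ 1, n ≥ 1, let F be a K×n real matrix with strictly positive entries whose columns each lie in Δ_K, let z ∈ Δ_K have strictly positive entries, let 0 < α < 1 and ε > 0, and set C = -log F entrywise. Suppose U* has strictly positive entries, each column of U* lies in Δ_K, and U* minimizes G(U) = (α/n)(⟨C,U⟩ - ε H(U)) + (1-α) KL(U·1_n/n ∣ z) over all nonnegative K×n matrices with columns in Δ_K. Then there exists λ ∈ ℝ^n such that for all i ∈ {1,…,K} and j ∈ {1,…,n}: U*_{ij} = exp(-C_{ij}/ε) · (n z_i / (U*·1_n)_i)^{(1-α)/(αε)} · exp(-n λ_j/(αε)). -/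
open Real Finset in
lemma stationarity_aux
    {K n : ℕ} (hn : 1 ≤ n)
    (z : Fin K → ℝ) (hzpos : ∀ i, 0 < z i)
    (α ε : ℝ) (hα0 : 0 < α) (hα1 : α < 1) (hε : 0 < ε)
    (C : Fin K → Fin n → ℝ)
    (Ustar : Fin K → Fin n → ℝ)
    (hUpos : ∀ i j, 0 < Ustar i j)
    (hUfeas : colSimplex Ustar)
    (hUmin : ∀ V : Fin K → Fin n → ℝ, colSimplex V →
      objG C z α ε Ustar ≤ objG C z α ε V)
    (i₁ i₂ : Fin K) (j : Fin n) (hne : i₁ ≠ i₂) :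
    α * (C i₁ j + ε * Real.log (Ustar i₁ j))
        + (1 - α) * Real.log ((∑ j', Ustar i₁ j') / (n * z i₁))
      = α * (C i₂ j + ε * Real.log (Ustar i₂ j))
        + (1 - α) * Real.log ((∑ j', Ustar i₂ j') / (n * z i₂)) := by
  have hnR : (0:ℝ) < n := by exact_mod_cast hn
  set d : Fin K → Fin n → ℝ := fun i j' =>
    (if i = i₁ ∧ j' = j then (1:ℝ) else 0) - (if i = i₂ ∧ j' = j then (1:ℝ) else 0) with hd
  set V : ℝ → Fin K → Fin n → ℝ := fun t i j' => Ustar i j' + t * d i j' with hV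
  have hV0 : V 0 = Ustar := by funext i j'; simp [hV]
  -- basic facts about d
  have hdabs : ∀ i j', |d i j'| ≤ 1 := by
    intro i j'; simp only [hd]; split_ifs <;> norm_num
  have hdsupp : ∀ i j', d i j' ≠ 0 → min (Ustar i₁ j) (Ustar i₂ j) ≤ Ustar i j' := by
    intro i j' h0
    simp only [hd] at h0
    split_ifs at h0 with h1 h2 h2
    · simp at h0
    · obtain ⟨rfl, rfl⟩ := h1; exact min_le_left _ _
    · obtain ⟨rfl, rfl⟩ := h2; exact min_le_right _ _
    · simp at h0
  have hcolsum : ∀ j', ∑ i, d i j' = 0 := by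
    intro j'
    simp [hd, Finset.sum_sub_distrib, ite_and]
  -- derivative facts
  have hVd : ∀ i j', HasDerivAt (fun t => V t i j') (d i j') 0 := by
    intro i j'
    simpa [hV] using ((hasDerivAt_id (0:ℝ)).mul_const (d i j')).const_add (Ustar i j')
  have hVpos0 : ∀ i j', V 0 i j' = Ustar i j' := by intro i j'; simp [hV]
  -- entropy term derivative
  have hent : ∀ i j', HasDerivAt (fun t => V t i j' * (Real.log (V t i j') - 1))
      (Real.log (Ustar i j') * d i j') 0 := by
    intro i j'
    have hne0 : Ustar i j' ≠ 0 := ne_of_gt (hUpos i j')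
    have h1 : HasDerivAt (fun x : ℝ => x * (Real.log x - 1)) (Real.log (Ustar i j'))
        (Ustar i j') := by
      have := (hasDerivAt_id (Ustar i j')).mul ((Real.hasDerivAt_log hne0).sub_const 1)
      refine this.congr_deriv ?_
      simp [hne0]
    have h1' : HasDerivAt (fun x : ℝ => x * (Real.log x - 1)) (Real.log (Ustar i j'))
        ((fun t => V t i j') 0) := by
      rw [show (fun t => V t i j') 0 = Ustar i j' from hVpos0 i j']; exact h1
    have := h1'.comp (0:ℝ) (hVd i j')
    exact this
  -- row-sum derivative
  have hrow : ∀ i, HasDerivAt (fun t => ∑ j', V t i j') (∑ j', d i j') 0 := by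
    intro i
    exact HasDerivAt.fun_sum (fun j' _ => hVd i j')
  have hSpos : ∀ i, 0 < ∑ j', Ustar i j' := by
    intro i
    have : Nonempty (Fin n) := Fin.pos_iff_nonempty.mp hn
    exact Finset.sum_pos (fun j' _ => hUpos i j') Finset.univ_nonempty
  -- klv term derivative
  have hklv : ∀ i, HasDerivAt
      (fun t => (∑ j', V t i j') / n * Real.log ((∑ j', V t i j') / n / z i)
        - (∑ j', V t i j') / n + z i)
      ((∑ j', d i j') / n * Real.log ((∑ j', Ustar i j') / (n * z i))) 0 := by
    intro i
    have hS0 : (∑ j', V 0 i j') = ∑ j', Ustar i j' := by simp [hVpos0]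
    have ha : HasDerivAt (fun t => (∑ j', V t i j') / n) ((∑ j', d i j') / n) 0 :=
      (hrow i).div_const (n:ℝ)
    have haz : HasDerivAt (fun t => (∑ j', V t i j') / n / z i)
        ((∑ j', d i j') / n / z i) 0 := ha.div_const (z i)
    have hzne : z i ≠ 0 := ne_of_gt (hzpos i)
    have hane : (∑ j', V 0 i j') / n / z i ≠ 0 := by
      rw [hS0]
      exact div_ne_zero (div_ne_zero (ne_of_gt (hSpos i)) (ne_of_gt hnR)) hzne
    have hlog : HasDerivAt (fun t => Real.log ((∑ j', V t i j') / n / z i))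
        (((∑ j', d i j') / n / z i) / ((∑ j', V 0 i j') / n / z i)) 0 := haz.log hane
    have hprod := ha.mul hlog
    refine ((hprod.sub ha).add_const (z i)).congr_deriv ?_
    symm
    rw [hS0]
    have hSne : (∑ j', Ustar i j') ≠ 0 := ne_of_gt (hSpos i)
    have : (∑ j', Ustar i j') / ↑n / z i = (∑ j', Ustar i j') / (↑n * z i) := by
      field_simp
    rw [this]
    field_simp
    ring
  -- total derivative
  set L : Fin K → ℝ := fun i => Real.log ((∑ j', Ustar i j') / (n * z i)) with hL
  set D : ℝ := α / n * ((∑ i, ∑ j', C i j' * d i j')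
      - ε * (-∑ i, ∑ j', Real.log (Ustar i j') * d i j'))
    + (1 - α) * ∑ i, (∑ j', d i j') / n * L i with hDdef
  have hfrobD : HasDerivAt (fun t => ∑ i, ∑ j', C i j' * V t i j')
      (∑ i, ∑ j', C i j' * d i j') 0 :=
    HasDerivAt.fun_sum fun i _ => HasDerivAt.fun_sum fun j' _ => (hVd i j').const_mul (C i j')
  have hentD : HasDerivAt (fun t => -∑ i, ∑ j', V t i j' * (Real.log (V t i j') - 1))
      (-∑ i, ∑ j', Real.log (Ustar i j') * d i j') 0 :=
    (HasDerivAt.fun_sum fun i _ => HasDerivAt.fun_sum fun j' _ => hent i j').neg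
  have hklvD : HasDerivAt (fun t => ∑ i, ((∑ j', V t i j') / n
        * Real.log ((∑ j', V t i j') / n / z i) - (∑ j', V t i j') / n + z i))
      (∑ i, (∑ j', d i j') / n * L i) 0 :=
    HasDerivAt.fun_sum fun i _ => hklv i
  have hφ : HasDerivAt (fun t => objG C z α ε (V t)) D 0 := by
    simp only [objG, frob, matEnt, klv, hDdef]
    exact ((hfrobD.sub (hentD.const_mul ε)).const_mul (α / n)).add (hklvD.const_mul (1 - α))
  -- local minimum
  have hδpos : 0 < min (Ustar i₁ j) (Ustar i₂ j) := lt_min (hUpos i₁ j) (hUpos i₂ j)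
  have hmin : IsLocalMin (fun t => objG C z α ε (V t)) 0 := by
    filter_upwards [Metric.ball_mem_nhds (0:ℝ) hδpos] with t ht
    have h3 : |t| < min (Ustar i₁ j) (Ustar i₂ j) := by
      simpa [Real.dist_eq] using ht
    have hfeas : colSimplex (V t) := by
      constructor
      · intro i j'
        by_cases h0 : d i j' = 0
        · simp [hV, h0, (hUpos i j').le]
        · have h1 : min (Ustar i₁ j) (Ustar i₂ j) ≤ Ustar i j' := hdsupp i j' h0
          have h2 : |t * d i j'| ≤ |t| := by
            rw [abs_mul]
            calc |t| * |d i j'| ≤ |t| * 1 := by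
                  have := hdabs i j'
                  nlinarith [abs_nonneg t]
              _ = |t| := mul_one _
          have h4 : -(t * d i j') ≤ |t * d i j'| := neg_le_abs _
          simp only [hV]
          linarith
      · intro j'
        have : ∑ i, V t i j' = (∑ i, Ustar i j') + t * ∑ i, d i j' := by
          simp only [hV]
          rw [Finset.mul_sum, ← Finset.sum_add_distrib]
        rw [this, hcolsum j', hUfeas.2 j']; ring
    have h0 : objG C z α ε (V 0) ≤ objG C z α ε (V t) := by
      rw [hV0]; exact hUmin (V t) hfeas
    exact h0
  have hD0 : D = 0 := hmin.hasDerivAt_eq_zero hφ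
  -- evaluate the sums
  have hs1 : ∑ i, ∑ j', C i j' * d i j' = C i₁ j - C i₂ j := by
    simp [hd, mul_sub, mul_ite, mul_one, mul_zero, ite_and, Finset.sum_sub_distrib,
      Finset.sum_ite_eq, Finset.sum_ite_eq']
  have hs2 : ∑ i, ∑ j', Real.log (Ustar i j') * d i j'
      = Real.log (Ustar i₁ j) - Real.log (Ustar i₂ j) := by
    simp [hd, mul_sub, mul_ite, mul_one, mul_zero, ite_and, Finset.sum_sub_distrib,
      Finset.sum_ite_eq, Finset.sum_ite_eq']
  have hrowsum : ∀ i, ∑ j', d i j'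
      = (if i = i₁ then (1:ℝ) else 0) - (if i = i₂ then (1:ℝ) else 0) := by
    intro i
    simp [hd, Finset.sum_sub_distrib, ite_and]
  have hs3 : ∑ i, (∑ j', d i j') / n * L i = L i₁ / n - L i₂ / n := by
    rw [Finset.sum_congr rfl (fun i _ => by rw [hrowsum i])]
    have : ∀ i : Fin K, ((if i = i₁ then (1:ℝ) else 0) - (if i = i₂ then (1:ℝ) else 0)) / n * L i
        = (if i = i₁ then L i / n else 0) - (if i = i₂ then L i / n else 0) := by
      intro i; split_ifs <;> ring
    rw [Finset.sum_congr rfl (fun i _ => this i), Finset.sum_sub_distrib]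
    simp [Finset.sum_ite_eq']
  rw [hDdef, hs1, hs2, hs3] at hD0
  have hne' : (n:ℝ) ≠ 0 := ne_of_gt hnR
  field_simp at hD0
  show α * (C i₁ j + ε * Real.log (Ustar i₁ j)) + (1 - α) * L i₁
      = α * (C i₂ j + ε * Real.log (Ustar i₂ j)) + (1 - α) * L i₂
  linear_combination hD0


/-- First-order (Lagrangian stationarity) characterization of the interior minimizer:
there exist multipliers `λ ∈ ℝ^n` such that
`U*_ij = exp(-C_ij/ε) · (n z_i / (U* 1_n)_i)^((1-α)/(αε)) · exp(-n λ_j/(αε))`. -/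
theorem lagrange_form_of_minimizer
    {K n : ℕ} (hK : 1 ≤ K) (hn : 1 ≤ n)
    (F : Fin K → Fin n → ℝ) (hFpos : ∀ i j, 0 < F i j)
    (hFcol : ∀ j, ∑ i, F i j = 1)
    (z : Fin K → ℝ) (hzpos : ∀ i, 0 < z i) (hzsum : ∑ i, z i = 1)
    (α ε : ℝ) (hα0 : 0 < α) (hα1 : α < 1) (hε : 0 < ε)
    (C : Fin K → Fin n → ℝ) (hC : ∀ i j, C i j = -Real.log (F i j))
    (Ustar : Fin K → Fin n → ℝ)
    (hUpos : ∀ i j, 0 < Ustar i j)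
    (hUfeas : colSimplex Ustar)
    (hUmin : ∀ V : Fin K → Fin n → ℝ, colSimplex V →
      objG C z α ε Ustar ≤ objG C z α ε V) :
    ∃ lam : Fin n → ℝ, ∀ i j,
      Ustar i j = Real.exp (-C i j / ε)
        * ((n : ℝ) * z i / (∑ j', Ustar i j')) ^ ((1 - α) / (α * ε))
        * Real.exp (-((n : ℝ) * lam j) / (α * ε)) := by
  have hnR : (0:ℝ) < n := by exact_mod_cast hn
  have hSpos : ∀ i, 0 < ∑ j', Ustar i j' := by
    intro i
    have : Nonempty (Fin n) := Fin.pos_iff_nonempty.mp hn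
    exact Finset.sum_pos (fun j' _ => hUpos i j') Finset.univ_nonempty
  set ψ : Fin K → Fin n → ℝ := fun i j => α * (C i j + ε * Real.log (Ustar i j))
    + (1 - α) * Real.log ((∑ j', Ustar i j') / (n * z i)) with hψ
  have hstat : ∀ i j, ψ i j = ψ ⟨0, hK⟩ j := by
    intro i j
    by_cases h : i = ⟨0, hK⟩
    · rw [h]
    · exact stationarity_aux hn z hzpos α ε hα0 hα1 hε C Ustar hUpos hUfeas hUmin
        i ⟨0, hK⟩ j h
  have hψeq : ∀ i j, ψ i j = α * (C i j + ε * Real.log (Ustar i j))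
      + (1 - α) * Real.log ((∑ j', Ustar i j') / (n * z i)) := fun i j => rfl
  clear_value ψ
  refine ⟨fun j => -(ψ ⟨0, hK⟩ j) / n, fun i j => ?_⟩
  have hU := hUpos i j
  have hS := hSpos i
  have hz := hzpos i
  have hratio : 0 < (n:ℝ) * z i / (∑ j', Ustar i j') := by positivity
  rw [Real.rpow_def_of_pos hratio]
  rw [← Real.exp_log hU, ← Real.exp_add, ← Real.exp_add]
  congr 1
  have hkey : α * (C i j + ε * Real.log (Ustar i j))
      + (1 - α) * Real.log ((∑ j', Ustar i j') / (n * z i)) = ψ ⟨0, hK⟩ j := by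
    rw [← hψeq i j]; exact hstat i j
  have hlog : Real.log ((n:ℝ) * z i / (∑ j', Ustar i j'))
      = - Real.log ((∑ j', Ustar i j') / ((n:ℝ) * z i)) := by
    rw [← Real.log_inv]
    congr 1
    field_simp
  have hnterm : -((n:ℝ) * (-(ψ ⟨0, hK⟩ j) / n)) = ψ ⟨0, hK⟩ j := by
    field_simp
  have hαne : α ≠ 0 := ne_of_gt hα0
  have hεne : ε ≠ 0 := ne_of_gt hε
  rw [hnterm, hlog, ← hkey]
  field_simp
  ring
end

section
/- Let K ≥ 1, n ≥ 1, let F be a K×n real matrix with strictly positive entries whose columns each lie in Δ_K, let z ∈ Δ_K have strictly positive entries, let 0 < α < 1 and ε > 0, and set C = -log F entrywise, M = F^{1/ε} entrywise and τ = (1 + αε/(1-α))^{-1}. Suppose a ∈ ℝ^K and b ∈ ℝ^n have strictly positive entries and satisfy a = (n z ⊘ (M b))^τ and b = 1_n ⊘ (Mᵀ a) entrywise. Then the matrix U = diag(a)·M·diag(b) has strictly positive entries, each column of U lies in Δ_K, and U is the minimizer over all nonnegative K×n matrices with columns in Δ_K of the objective G(U) = (α/n)(⟨C,U⟩ - ε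 H(U)) + (1-α) KL(U·1_n/n ∣ z). -/
open Finset

private lemma ent_le (u t : ℝ) (hu : 0 ≤ u) (ht : 0 < t) :
    u * Real.log t - t ≤ u * Real.log u - u := by
  rcases hu.eq_or_lt with h | h
  · rw [← h]
    simp only [zero_mul, zero_sub, sub_zero, Real.log_zero]
    linarith
  · have h1 : Real.log (t / u) ≤ t / u - 1 := Real.log_le_sub_one_of_pos (div_pos ht h)
    rw [Real.log_div ht.ne' h.ne'] at h1
    have h2 : u * (Real.log t - Real.log u) ≤ u * (t / u - 1) :=
      mul_le_mul_of_nonneg_left h1 h.le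
    have h3 : u * (t / u - 1) = t - u := by field_simp
    rw [h3, mul_sub] at h2
    linarith

private lemma ent_lt (u t : ℝ) (hu : 0 ≤ u) (ht : 0 < t) (hne : u ≠ t) :
    u * Real.log t - t < u * Real.log u - u := by
  rcases hu.eq_or_lt with h | h
  · rw [← h]
    simp only [zero_mul, zero_sub, sub_zero, Real.log_zero]
    linarith
  · have hne1 : t / u ≠ 1 := by
      intro hh
      rw [div_eq_one_iff_eq h.ne'] at hh
      exact hne hh.symm
    have h1 : Real.log (t / u) < t / u - 1 :=
      Real.log_lt_sub_one_of_pos (div_pos ht h) hne1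
    rw [Real.log_div ht.ne' h.ne'] at h1
    have h2 : u * (Real.log t - Real.log u) < u * (t / u - 1) :=
      (mul_lt_mul_iff_right₀ h).mpr h1
    have h3 : u * (t / u - 1) = t - u := by field_simp
    rw [h3, mul_sub] at h2
    linarith

private lemma klv_term (r zz : ℝ) (hr : 0 ≤ r) (hz : 0 < zz) :
    r * Real.log (r / zz) = r * Real.log r - r * Real.log zz := by
  rcases hr.eq_or_lt with h | h
  · rw [← h]; simp
  · rw [Real.log_div h.ne' hz.ne']; ring

/-- A solution of the Sinkhorn fixed-point equations `a = (nz ⊘ Mb)^τ`,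
`b = 1_n ⊘ Mᵀa` yields, via `U = diag(a) M diag(b)`, a positive feasible matrix
which is the (unique) minimizer of the entropic unbalanced OT objective. -/
theorem minimizer_of_sinkhorn_fixed_point
    {K n : ℕ} (hK : 1 ≤ K) (hn : 1 ≤ n)
    (F : Fin K → Fin n → ℝ) (hFpos : ∀ i j, 0 < F i j)
    (hFcol : ∀ j, ∑ i, F i j = 1)
    (z : Fin K → ℝ) (hzpos : ∀ i, 0 < z i) (hzsum : ∑ i, z i = 1)
    (α ε : ℝ) (hα0 : 0 < α) (hα1 : α < 1) (hε : 0 < ε)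
    (C : Fin K → Fin n → ℝ) (hC : ∀ i j, C i j = -Real.log (F i j))
    (M : Fin K → Fin n → ℝ) (hM : ∀ i j, M i j = F i j ^ (1 / ε))
    (τ : ℝ) (hτ : τ = (1 + α * ε / (1 - α))⁻¹)
    (a : Fin K → ℝ) (b : Fin n → ℝ)
    (hapos : ∀ i, 0 < a i) (hbpos : ∀ j, 0 < b j)
    (ha : ∀ i, a i = ((n : ℝ) * z i / (∑ j, M i j * b j)) ^ τ)
    (hb : ∀ j, b j = (∑ i, M i j * a i)⁻¹)
    (U : Fin K → Fin n → ℝ) (hU : ∀ i j, U i j = a i * M i j * b j) :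
    (∀ i j, 0 < U i j) ∧ colSimplex U ∧
      (∀ V : Fin K → Fin n → ℝ, colSimplex V → V ≠ U →
        objG C z α ε U < objG C z α ε V) := by
  haveI : NeZero n := ⟨Nat.one_le_iff_ne_zero.mp hn⟩
  haveI : NeZero K := ⟨Nat.one_le_iff_ne_zero.mp hK⟩
  have hn0 : (0 : ℝ) < n := by exact_mod_cast Nat.lt_of_lt_of_le Nat.one_pos hn
  have h1α : (0 : ℝ) < 1 - α := by linarith
  have hMpos : ∀ i j, 0 < M i j := fun i j => by
    rw [hM]; exact Real.rpow_pos_of_pos (hFpos i j) _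
  have hUpos : ∀ i j, 0 < U i j := fun i j =>
    hU i j ▸ mul_pos (mul_pos (hapos i) (hMpos i j)) (hbpos j)
  -- column sums of U are 1
  have hUcol : ∀ j, ∑ i, U i j = 1 := by
    intro j
    have hsum : ∑ i, U i j = (∑ i, M i j * a i) * b j := by
      rw [Finset.sum_mul]
      exact Finset.sum_congr rfl fun i _ => by rw [hU]; ring
    have hpos : 0 < ∑ i, M i j * a i :=
      Finset.sum_pos (fun i _ => mul_pos (hMpos i j) (hapos i)) Finset.univ_nonempty
    rw [hsum, hb j, mul_inv_cancel₀ hpos.ne']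
  -- positivity of the row "denominators"
  have hTpos : ∀ i, 0 < ∑ j, M i j * b j := fun i =>
    Finset.sum_pos (fun j _ => mul_pos (hMpos i j) (hbpos j)) Finset.univ_nonempty
  have hS : ∀ i, ∑ j, U i j = a i * ∑ j, M i j * b j := by
    intro i
    rw [Finset.mul_sum]
    exact Finset.sum_congr rfl fun j _ => by rw [hU]; ring
  have hSpos : ∀ i, 0 < ∑ j, U i j := fun i =>
    (hS i) ▸ mul_pos (hapos i) (hTpos i)
  -- τ facts
  have hτ1 : (0 : ℝ) < 1 + α * ε / (1 - α) := by
    have := div_pos (mul_pos hα0 hε) h1α; linarith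
  have hτpos : 0 < τ := hτ ▸ inv_pos.mpr hτ1
  have hτinv : τ⁻¹ = 1 + α * ε / (1 - α) := by rw [hτ, inv_inv]
  -- log of a
  have hloga : ∀ i, Real.log (a i)
      = τ * (Real.log n + Real.log (z i) - Real.log (∑ j, M i j * b j)) := by
    intro i
    have hnum : (0 : ℝ) < (n : ℝ) * z i := mul_pos hn0 (hzpos i)
    rw [ha i, Real.log_rpow (div_pos hnum (hTpos i)),
      Real.log_div hnum.ne' (hTpos i).ne', Real.log_mul hn0.ne' (hzpos i).ne']
  -- the key "row multiplier" identity
  have hd : ∀ i, (1 - α) * (Real.log ((∑ j, U i j) / n) - Real.log (z i))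
      = -(α * ε) * Real.log (a i) := by
    intro i
    have h1 : Real.log ((∑ j, U i j) / n)
        = Real.log (a i) + Real.log (∑ j, M i j * b j) - Real.log n := by
      rw [hS i, Real.log_div (mul_pos (hapos i) (hTpos i)).ne' hn0.ne',
        Real.log_mul (hapos i).ne' (hTpos i).ne']
    have h2 : Real.log (∑ j, M i j * b j)
        = Real.log n + Real.log (z i) - τ⁻¹ * Real.log (a i) := by
      have h := hloga i
      have h' : τ⁻¹ * Real.log (a i)
          = Real.log n + Real.log (z i) - Real.log (∑ j, M i j * b j) := by
        rw [h, ← mul_assoc, inv_mul_cancel₀ hτpos.ne', one_mul]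
      linarith
    rw [h1, h2, hτinv]
    field_simp
    ring
  -- log of U entries
  have hlogU : ∀ i j, Real.log (U i j)
      = Real.log (a i) + ε⁻¹ * Real.log (F i j) + Real.log (b j) := by
    intro i j
    rw [hU, Real.log_mul (mul_pos (hapos i) (hMpos i j)).ne' (hbpos j).ne',
      Real.log_mul (hapos i).ne' (hMpos i j).ne', hM, Real.log_rpow (hFpos i j), one_div]
  -- the gradient of the objective at U is constant along columns
  have hgrad : ∀ i j,
      α / n * (C i j + ε * Real.log (U i j))
        + (1 - α) / n * (Real.log ((∑ j', U i j') / n) - Real.log (z i))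
      = α * ε / n * Real.log (b j) := by
    intro i j
    have h1 := hd i
    have h2 := hlogU i j
    have h3 : ε * (Real.log (a i) + ε⁻¹ * Real.log (F i j) + Real.log (b j))
        = ε * Real.log (a i) + Real.log (F i j) + ε * Real.log (b j) := by
      field_simp
    rw [hC, h2, h3]
    have hne : (n : ℝ) ≠ 0 := hn0.ne'
    field_simp
    linarith [h1]
  -- rewriting the objective in "entropy form"
  have hobj : ∀ W : Fin K → Fin n → ℝ, (∀ i j, 0 ≤ W i j) →
      objG C z α ε W
        = α / n * (∑ i, ∑ j, (C i j * W i j + ε * (W i j * Real.log (W i j) - W i j)))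
          + (1 - α) * (∑ i, ((∑ j, W i j) / n * Real.log ((∑ j, W i j) / n)
              - (∑ j, W i j) / n * Real.log (z i) - (∑ j, W i j) / n + z i)) := by
    intro W hW
    have hA : frob C W - ε * matEnt W
        = ∑ i, ∑ j, (C i j * W i j + ε * (W i j * Real.log (W i j) - W i j)) := by
      unfold frob matEnt
      rw [mul_neg, sub_neg_eq_add, Finset.mul_sum, ← Finset.sum_add_distrib]
      refine Finset.sum_congr rfl fun i _ => ?_
      rw [Finset.mul_sum, ← Finset.sum_add_distrib]
      exact Finset.sum_congr rfl fun j _ => by ring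
    have hB : klv (fun i => (∑ j, W i j) / n) z
        = ∑ i, ((∑ j, W i j) / n * Real.log ((∑ j, W i j) / n)
            - (∑ j, W i j) / n * Real.log (z i) - (∑ j, W i j) / n + z i) := by
      unfold klv
      refine Finset.sum_congr rfl fun i _ => ?_
      have hr : 0 ≤ (∑ j, W i j) / (n : ℝ) :=
        div_nonneg (Finset.sum_nonneg fun j _ => hW i j) hn0.le
      rw [klv_term _ _ hr (hzpos i)]
    unfold objG
    rw [hA, hB]
  refine ⟨hUpos, ⟨fun i j => (hUpos i j).le, hUcol⟩, ?_⟩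
  intro V hV hne
  obtain ⟨hVnn, hVcol⟩ := hV
  obtain ⟨i0, j0, hij0⟩ : ∃ i j, V i j ≠ U i j := by
    by_contra h
    push_neg at h
    exact hne (funext fun i => funext fun j => h i j)
  -- the linearized objective takes the same value at U and V
  have hdiff :
      α / n * (∑ i, ∑ j, (C i j * V i j + ε * (V i j * Real.log (U i j) - U i j)))
        + (1 - α) * (∑ i, ((∑ j, V i j) / n * Real.log ((∑ j, U i j) / n)
            - (∑ j, U i j) / n - (∑ j, V i j) / n * Real.log (z i) + z i))
      = α / n * (∑ i, ∑ j, (C i j * U i j + ε * (U i j * Real.log (U i j) - U i j)))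
        + (1 - α) * (∑ i, ((∑ j, U i j) / n * Real.log ((∑ j, U i j) / n)
            - (∑ j, U i j) / n - (∑ j, U i j) / n * Real.log (z i) + z i)) := by
    have e1 : (∑ i, ∑ j, (C i j * V i j + ε * (V i j * Real.log (U i j) - U i j)))
        - (∑ i, ∑ j, (C i j * U i j + ε * (U i j * Real.log (U i j) - U i j)))
        = ∑ i, ∑ j, (V i j - U i j) * (C i j + ε * Real.log (U i j)) := by
      rw [← Finset.sum_sub_distrib]
      refine Finset.sum_congr rfl fun i _ => ?_
      rw [← Finset.sum_sub_distrib]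
      exact Finset.sum_congr rfl fun j _ => by ring
    have e2 : (∑ i, ((∑ j, V i j) / n * Real.log ((∑ j, U i j) / n)
            - (∑ j, U i j) / n - (∑ j, V i j) / n * Real.log (z i) + z i))
        - (∑ i, ((∑ j, U i j) / n * Real.log ((∑ j, U i j) / n)
            - (∑ j, U i j) / n - (∑ j, U i j) / n * Real.log (z i) + z i))
        = ∑ i, ((∑ j, (V i j - U i j))
            * ((Real.log ((∑ j, U i j) / n) - Real.log (z i)) / n)) := by
      rw [← Finset.sum_sub_distrib]
      refine Finset.sum_congr rfl fun i _ => ?_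
      rw [Finset.sum_sub_distrib]
      field_simp
      ring
    have e3 : α / n * (∑ i, ∑ j, (V i j - U i j) * (C i j + ε * Real.log (U i j)))
        + (1 - α) * (∑ i, ((∑ j, (V i j - U i j))
            * ((Real.log ((∑ j, U i j) / n) - Real.log (z i)) / n)))
        = ∑ i, ∑ j, (V i j - U i j) * (α * ε / n * Real.log (b j)) := by
      rw [Finset.mul_sum, Finset.mul_sum, ← Finset.sum_add_distrib]
      refine Finset.sum_congr rfl fun i _ => ?_
      rw [Finset.mul_sum, Finset.sum_mul, Finset.mul_sum, ← Finset.sum_add_distrib]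
      refine Finset.sum_congr rfl fun j _ => ?_
      linear_combination (V i j - U i j) * hgrad i j
    have e4 : (∑ i, ∑ j, (V i j - U i j) * (α * ε / n * Real.log (b j))) = 0 := by
      rw [Finset.sum_comm]
      refine Finset.sum_eq_zero fun j _ => ?_
      rw [← Finset.sum_mul, Finset.sum_sub_distrib, hVcol j, hUcol j]
      simp
    have expand : ∀ x1 x2 y1 y2 : ℝ,
        (α / n * x1 + (1 - α) * y1) - (α / n * x2 + (1 - α) * y2)
        = α / n * (x1 - x2) + (1 - α) * (y1 - y2) := fun _ _ _ _ => by ring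
    have key := expand
      (∑ i, ∑ j, (C i j * V i j + ε * (V i j * Real.log (U i j) - U i j)))
      (∑ i, ∑ j, (C i j * U i j + ε * (U i j * Real.log (U i j) - U i j)))
      (∑ i, ((∑ j, V i j) / n * Real.log ((∑ j, U i j) / n)
            - (∑ j, U i j) / n - (∑ j, V i j) / n * Real.log (z i) + z i))
      (∑ i, ((∑ j, U i j) / n * Real.log ((∑ j, U i j) / n)
            - (∑ j, U i j) / n - (∑ j, U i j) / n * Real.log (z i) + z i))
    rw [e1, e2, e3, e4] at key
    linarith
  -- strict convexity step for the entropic part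
  have hA'lt : (∑ i, ∑ j, (C i j * V i j + ε * (V i j * Real.log (U i j) - U i j)))
      < ∑ i, ∑ j, (C i j * V i j + ε * (V i j * Real.log (V i j) - V i j)) := by
    have hterm : ∀ i j, C i j * V i j + ε * (V i j * Real.log (U i j) - U i j)
        ≤ C i j * V i j + ε * (V i j * Real.log (V i j) - V i j) := by
      intro i j
      have h := ent_le (V i j) (U i j) (hVnn i j) (hUpos i j)
      have h2 := mul_le_mul_of_nonneg_left h hε.le
      linarith
    refine Finset.sum_lt_sum (fun i _ => Finset.sum_le_sum fun j _ => hterm i j)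
      ⟨i0, Finset.mem_univ _, ?_⟩
    refine Finset.sum_lt_sum (fun j _ => hterm i0 j) ⟨j0, Finset.mem_univ _, ?_⟩
    have h := ent_lt (V i0 j0) (U i0 j0) (hVnn i0 j0) (hUpos i0 j0) hij0
    have h2 := mul_lt_mul_of_pos_left h hε
    linarith
  -- convexity step for the KL part
  have hB'le : (∑ i, ((∑ j, V i j) / n * Real.log ((∑ j, U i j) / n)
            - (∑ j, U i j) / n - (∑ j, V i j) / n * Real.log (z i) + z i))
      ≤ ∑ i, ((∑ j, V i j) / n * Real.log ((∑ j, V i j) / n)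
            - (∑ j, V i j) / n * Real.log (z i) - (∑ j, V i j) / n + z i) := by
    refine Finset.sum_le_sum fun i _ => ?_
    have hrV : 0 ≤ (∑ j, V i j) / (n : ℝ) :=
      div_nonneg (Finset.sum_nonneg fun j _ => hVnn i j) hn0.le
    have hrU : 0 < (∑ j, U i j) / (n : ℝ) := div_pos (hSpos i) hn0
    have h := ent_le ((∑ j, V i j) / n) ((∑ j, U i j) / n) hrV hrU
    linarith
  -- assemble
  rw [hobj U (fun i j => (hUpos i j).le), hobj V hVnn]
  have hBUeq : (∑ i, ((∑ j, U i j) / (n : ℝ) * Real.log ((∑ j, U i j) / n)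
          - (∑ j, U i j) / n * Real.log (z i) - (∑ j, U i j) / n + z i))
      = ∑ i, ((∑ j, U i j) / (n : ℝ) * Real.log ((∑ j, U i j) / n)
          - (∑ j, U i j) / n - (∑ j, U i j) / n * Real.log (z i) + z i) :=
    Finset.sum_congr rfl fun i _ => by ring
  rw [hBUeq, ← hdiff]
  have hc1 : (0 : ℝ) < α / n := div_pos hα0 hn0
  have h1 := mul_lt_mul_of_pos_left hA'lt hc1
  have h2 := mul_le_mul_of_nonneg_left hB'le h1α.le
  linarith
end

section
/- Let K ≥ 1, n ≥ 1, let C be a real K×n matrix, let z ∈ Δ_K have strictly positive entries, and let 0 < α < 1 and ε > 0. Then the unique minimizer U* of G(U) = (α/n)(⟨C,U⟩ - ε H(U)) + (1-α) KL(U·1_n/n ∣ z) over the set of nonnegative K×n matrices whose columns lie in Δ_K has strictly positive entries. -/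
/-- The set of nonnegative `K × n` matrices whose columns lie in `Δ_K`. -/
def colSimplexSet (K n : ℕ) : Set (Fin K → Fin n → ℝ) :=
  {U | (∀ i j, 0 ≤ U i j) ∧ ∀ j, ∑ i, U i j = 1}



lemma key_ineq (x y : ℝ) (hx : 0 ≤ x) (hy : 0 < y) :
    y * Real.log y - y - (x * Real.log x - x) ≤ (y - x) * Real.log y := by
  rcases eq_or_lt_of_le hx with h | h
  · rw [← h]; simp; linarith
  · have h1 : Real.log y - Real.log x ≤ y / x - 1 := by
      rw [← Real.log_div hy.ne' h.ne']
      exact Real.log_le_sub_one_of_pos (div_pos hy h)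
    have h2 : x * (Real.log y - Real.log x) ≤ x * (y / x - 1) :=
      mul_le_mul_of_nonneg_left h1 h.le
    have h3 : x * (y / x - 1) = y - x := by field_simp
    nlinarith

lemma xlog_div (x z : ℝ) (hx : 0 ≤ x) (hz : 0 < z) :
    x * Real.log (x / z) = x * Real.log x - x * Real.log z := by
  rcases eq_or_lt_of_le hx with h | h
  · rw [← h]; ring
  · rw [Real.log_div h.ne' hz.ne']; ring

lemma sum_one_point {n : ℕ} (j : Fin n) (F G : Fin n → ℝ)
    (heq : ∀ q, q ≠ j → G q = F q) :
    ∑ q, G q = (∑ q, F q) + (G j - F j) := by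
  have hs : ∑ q, (G q - F q) = G j - F j := by
    rw [Finset.sum_congr rfl (fun q _ => show G q - F q = if q = j then G j - F j else 0 by
      split
      · rename_i hq; rw [hq]
      · rename_i hq; rw [heq q hq]; ring)]
    simp
  rw [Finset.sum_sub_distrib] at hs
  linarith

lemma sum_two_point1 {K : ℕ} (i i1 : Fin K) (hne : i ≠ i1) (F G : Fin K → ℝ)
    (heq : ∀ p, p ≠ i → p ≠ i1 → G p = F p) :
    ∑ p, G p = (∑ p, F p) + (G i - F i) + (G i1 - F i1) := by
  have hs : ∑ p, (G p - F p) = (G i - F i) + (G i1 - F i1) := by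
    rw [Finset.sum_eq_add_of_mem i i1 (Finset.mem_univ _) (Finset.mem_univ _) hne]
    intro p _ hp
    rw [heq p hp.1 hp.2]; ring
  rw [Finset.sum_sub_distrib] at hs
  linarith

lemma sum_two_point2 {K n : ℕ} (i i1 : Fin K) (j : Fin n) (hne : i ≠ i1)
    (F G : Fin K → Fin n → ℝ)
    (heqj : ∀ p q, q ≠ j → G p q = F p q)
    (heqp : ∀ p, p ≠ i → p ≠ i1 → G p j = F p j) :
    ∑ p, ∑ q, G p q = (∑ p, ∑ q, F p q) + (G i j - F i j) + (G i1 j - F i1 j) := by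
  have hrow : ∀ p, ∑ q, G p q = (∑ q, F p q) + (G p j - F p j) :=
    fun p => sum_one_point j _ _ (heqj p)
  calc ∑ p, ∑ q, G p q = ∑ p, ((∑ q, F p q) + (G p j - F p j)) :=
        Finset.sum_congr rfl (fun p _ => hrow p)
    _ = (∑ p, ∑ q, F p q) + ∑ p, (G p j - F p j) := by rw [Finset.sum_add_distrib]
    _ = _ := by
        have := sum_two_point1 i i1 hne (fun _ => (0:ℝ)) (fun p => G p j - F p j)
          (fun p hp hp1 => by rw [heqp p hp hp1]; ring)
        simp only [Finset.sum_const_zero] at this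
        rw [this]; ring

set_option maxHeartbeats 1000000 in
/-- The (unique) minimizer of the entropic objective `G` over the set of
nonnegative matrices with columns in the simplex has strictly positive entries. -/
theorem minimizer_pos_entries
    {K n : ℕ} (hK : 1 ≤ K) (hn : 1 ≤ n)
    (C : Fin K → Fin n → ℝ)
    (z : Fin K → ℝ) (hzpos : ∀ i, 0 < z i) (hzsum : ∑ i, z i = 1)
    (α ε : ℝ) (hα0 : 0 < α) (hα1 : α < 1) (hε : 0 < ε)
    (Ustar : Fin K → Fin n → ℝ) (hUfeas : Ustar ∈ colSimplexSet K n)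
    (hUmin : ∀ V ∈ colSimplexSet K n, objG C z α ε Ustar ≤ objG C z α ε V) :
    ∀ i j, 0 < Ustar i j := by
  obtain ⟨hpos, hcol⟩ := hUfeas
  intro i j
  by_contra hle
  push_neg at hle
  have h0 : Ustar i j = 0 := le_antisymm hle (hpos i j)
  have hex : ∃ i1, 0 < Ustar i1 j := by
    by_contra hc
    push_neg at hc
    have hs : ∑ p, Ustar p j ≤ 0 := Finset.sum_nonpos (fun p _ => hc p)
    rw [hcol j] at hs; linarith
  obtain ⟨i1, hi1⟩ := hex
  have hne : i ≠ i1 := by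
    intro h; rw [← h] at hi1; rw [h0] at hi1; exact lt_irrefl 0 hi1
  have hn1 : (1:ℝ) ≤ (n:ℝ) := by exact_mod_cast hn
  have hnpos : (0:ℝ) < (n:ℝ) := by linarith
  set a := Ustar i1 j with ha
  have hapos : 0 < a := hi1
  have hent_le : ∀ p q, Ustar p q ≤ 1 := by
    intro p q
    have := Finset.single_le_sum (f := fun p' => Ustar p' q) (fun p' _ => hpos p' q)
      (Finset.mem_univ p)
    rwa [hcol q] at this
  have ha1 : a ≤ 1 := hent_le i1 j
  set r0 := ∑ q, Ustar i q with hr0def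
  set r1 := ∑ q, Ustar i1 q with hr1def
  have hr0 : 0 ≤ r0 := Finset.sum_nonneg (fun q _ => hpos i q)
  have hr0n : r0 ≤ n := by
    calc r0 ≤ ∑ _q : Fin n, (1:ℝ) := Finset.sum_le_sum (fun q _ => hent_le i q)
      _ = n := by simp
  have har1 : a ≤ r1 :=
    Finset.single_le_sum (f := fun q => Ustar i1 q) (fun q _ => hpos i1 q) (Finset.mem_univ j)
  set M := α/n*((C i j - C i1 j) + ε*(-1 - Real.log (a/2)))
    + (1-α)/n*(Real.log 2 - Real.log (z i) + Real.log (z i1) - Real.log (a/(2*n))) with hMdef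
  set t := min (a/2) (Real.exp (-(M+1)*n/(α*ε))) with htdef
  have ht0 : 0 < t := lt_min (by linarith) (Real.exp_pos _)
  have hta : t ≤ a/2 := min_le_left _ _
  have ht1 : t ≤ 1 := by linarith
  have hlogt : Real.log t ≤ -(M+1)*n/(α*ε) := by
    calc Real.log t ≤ Real.log (Real.exp (-(M+1)*n/(α*ε))) :=
          Real.log_le_log ht0 (min_le_right _ _)
      _ = -(M+1)*n/(α*ε) := Real.log_exp _
  set V : Fin K → Fin n → ℝ := fun p q =>
    if p = i ∧ q = j then t else if p = i1 ∧ q = j then a - t else Ustar p q with hVdef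
  have hVoff : ∀ p q, ¬(p = i ∧ q = j) → ¬(p = i1 ∧ q = j) → V p q = Ustar p q := by
    intro p q h1 h2; simp only [hVdef, if_neg h1, if_neg h2]
  have hVij : V i j = t := by simp [hVdef]
  have hVi1j : V i1 j = a - t := by
    simp [hVdef, Ne.symm hne]
  have hVpos : ∀ p q, 0 ≤ V p q := by
    intro p q
    simp only [hVdef]
    split
    · linarith
    · split
      · linarith
      · exact hpos p q
  have hVcol : ∀ q, ∑ p, V p q = 1 := by
    intro q
    by_cases hq : q = j
    · subst hq
      rw [sum_two_point1 i i1 hne (fun p => Ustar p q) (fun p => V p q)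
        (fun p hp hp1 => by rw [hVoff p q (by tauto) (by tauto)])]
      rw [hVij, hVi1j, h0, hcol q, ← ha]; ring
    · rw [Finset.sum_congr rfl (fun p _ => hVoff p q (by tauto) (by tauto)), hcol q]
  have hfrob : frob C V = frob C Ustar + (t * C i j - t * C i1 j) := by
    unfold frob
    rw [sum_two_point2 i i1 j hne (fun p q => C p q * Ustar p q) (fun p q => C p q * V p q)
      (fun p q hq => by rw [hVoff p q (by tauto) (by tauto)])
      (fun p hp hp1 => by rw [hVoff p j (by tauto) (by tauto)])]
    rw [hVij, hVi1j, h0, ← ha]; ring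
  have hS : (∑ p, ∑ q, V p q * (Real.log (V p q) - 1))
      = (∑ p, ∑ q, Ustar p q * (Real.log (Ustar p q) - 1))
        + t * (Real.log t - 1)
        + ((a - t) * (Real.log (a - t) - 1) - a * (Real.log a - 1)) := by
    rw [sum_two_point2 i i1 j hne (fun p q => Ustar p q * (Real.log (Ustar p q) - 1))
      (fun p q => V p q * (Real.log (V p q) - 1))
      (fun p q hq => by rw [hVoff p q (by tauto) (by tauto)])
      (fun p hp hp1 => by rw [hVoff p j (by tauto) (by tauto)])]
    rw [hVij, hVi1j, h0, ← ha]; ring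
  have hrowi : ∑ q, V i q = r0 + t := by
    rw [sum_one_point j (fun q => Ustar i q) (fun q => V i q)
      (fun q hq => by rw [hVoff i q (by tauto) (by tauto)]), hVij, h0, ← hr0def]; ring
  have hrowi1 : ∑ q, V i1 q = r1 - t := by
    rw [sum_one_point j (fun q => Ustar i1 q) (fun q => V i1 q)
      (fun q hq => by rw [hVoff i1 q (by tauto) (by tauto)]), hVi1j, ← ha, ← hr1def]; ring
  have hrowo : ∀ p, p ≠ i → p ≠ i1 → ∑ q, V p q = ∑ q, Ustar p q := by
    intro p hp hp1
    exact Finset.sum_congr rfl (fun q _ => hVoff p q (by tauto) (by tauto))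
  have hKL : klv (fun p => (∑ q, V p q)/n) z
      = klv (fun p => (∑ q, Ustar p q)/n) z
        + (((r0+t)/n) * Real.log (((r0+t)/n) / z i) - (r0+t)/n
            - ((r0/n) * Real.log ((r0/n) / z i) - r0/n))
        + (((r1-t)/n) * Real.log (((r1-t)/n) / z i1) - (r1-t)/n
            - ((r1/n) * Real.log ((r1/n) / z i1) - r1/n)) := by
    unfold klv
    rw [sum_two_point1 i i1 hne
      (fun p => ((∑ q, Ustar p q)/n) * Real.log (((∑ q, Ustar p q)/n) / z p)
        - (∑ q, Ustar p q)/n + z p)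
      (fun p => ((∑ q, V p q)/n) * Real.log (((∑ q, V p q)/n) / z p)
        - (∑ q, V p q)/n + z p)
      (fun p hp hp1 => by rw [hrowo p hp hp1])]
    simp only [hrowi, hrowi1, ← hr0def, ← hr1def]
    ring
  -- bounds
  have he2 : (a - t) * (Real.log (a - t) - 1) - a * (Real.log a - 1) ≤ -(t * Real.log (a/2)) := by
    have hy : (0:ℝ) < a - t := by linarith
    have hkey := key_ineq a (a - t) hapos.le hy
    have hlog : Real.log (a/2) ≤ Real.log (a - t) :=
      Real.log_le_log (by linarith) (by linarith)
    have h5 : -t * Real.log (a - t) ≤ -t * Real.log (a/2) :=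
      mul_le_mul_of_nonpos_left hlog (by linarith)
    have h7 : ((a - t) - a) * Real.log (a - t) = -t * Real.log (a - t) := by ring
    rw [h7] at hkey
    linarith
  have hk1 : ((r0+t)/n) * Real.log (((r0+t)/n) / z i) - (r0+t)/n
      - ((r0/n) * Real.log ((r0/n) / z i) - r0/n)
      ≤ t/n * (Real.log 2 - Real.log (z i)) := by
    have hy : (0:ℝ) < (r0+t)/n := by positivity
    have hx : (0:ℝ) ≤ r0/n := by positivity
    rw [xlog_div _ _ hy.le (hzpos i), xlog_div _ _ hx (hzpos i)]
    have hkey := key_ineq (r0/n) ((r0+t)/n) hx hy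
    have hyx : (r0+t)/n - r0/n = t/n := by ring
    rw [hyx] at hkey
    have hlog2 : Real.log ((r0+t)/n) ≤ Real.log 2 :=
      Real.log_le_log hy (by rw [div_le_iff₀ hnpos]; linarith)
    have h5 : t/n * Real.log ((r0+t)/n) ≤ t/n * Real.log 2 :=
      mul_le_mul_of_nonneg_left hlog2 (by positivity)
    have h6 : (r0+t)/n * Real.log (z i) - r0/n * Real.log (z i) = t/n * Real.log (z i) := by
      rw [← sub_mul, hyx]
    have h8 : t/n * (Real.log 2 - Real.log (z i)) = t/n * Real.log 2 - t/n * Real.log (z i) := by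
      ring
    linarith
  have hk2 : ((r1-t)/n) * Real.log (((r1-t)/n) / z i1) - (r1-t)/n
      - ((r1/n) * Real.log ((r1/n) / z i1) - r1/n)
      ≤ t/n * (Real.log (z i1) - Real.log (a/(2*n))) := by
    have hy : (0:ℝ) < (r1-t)/n := by
      apply div_pos _ hnpos; linarith
    have hx : (0:ℝ) ≤ r1/n := by
      apply div_nonneg _ hnpos.le; linarith
    rw [xlog_div _ _ hy.le (hzpos i1), xlog_div _ _ hx (hzpos i1)]
    have hkey := key_ineq (r1/n) ((r1-t)/n) hx hy
    have hyx : (r1-t)/n - r1/n = -(t/n) := by ring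
    rw [hyx] at hkey
    have hloglb : Real.log (a/(2*n)) ≤ Real.log ((r1-t)/n) := by
      apply Real.log_le_log (by positivity)
      rw [div_le_div_iff₀ (by positivity) hnpos]
      nlinarith
    have h5 : -(t/n) * Real.log ((r1-t)/n) ≤ -(t/n) * Real.log (a/(2*n)) :=
      mul_le_mul_of_nonpos_left hloglb (neg_nonpos.mpr (by positivity))
    have h6 : (r1-t)/n * Real.log (z i1) - r1/n * Real.log (z i1)
        = -(t/n) * Real.log (z i1) := by rw [← sub_mul, hyx]
    have h8 : t/n * (Real.log (z i1) - Real.log (a/(2*n)))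
        = -(-(t/n) * Real.log (z i1)) - t/n * Real.log (a/(2*n)) := by ring
    linarith
  -- objective difference
  have hobj : objG C z α ε V - objG C z α ε Ustar
      = α/n * ((t * C i j - t * C i1 j)
          + ε * ((t * (Real.log t - 1))
            + ((a - t) * (Real.log (a - t) - 1) - a * (Real.log a - 1))))
        + (1-α) * ((((r0+t)/n) * Real.log (((r0+t)/n) / z i) - (r0+t)/n
            - ((r0/n) * Real.log ((r0/n) / z i) - r0/n))
          + (((r1-t)/n) * Real.log (((r1-t)/n) / z i1) - (r1-t)/n
            - ((r1/n) * Real.log ((r1/n) / z i1) - r1/n))) := by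
    simp only [objG, matEnt]
    rw [hfrob, hS, hKL]
    ring
  have hc1 : (0:ℝ) ≤ α/n := by positivity
  have hc2 : (0:ℝ) ≤ 1 - α := by linarith
  have hstep : objG C z α ε V - objG C z α ε Ustar ≤ t * ((α*ε/n) * Real.log t + M) := by
    rw [hobj]
    have hE : (t * (Real.log t - 1))
        + ((a - t) * (Real.log (a - t) - 1) - a * (Real.log a - 1))
        ≤ t * Real.log t - t - t * Real.log (a/2) := by linarith
    have hE2 : ε * ((t * (Real.log t - 1))
        + ((a - t) * (Real.log (a - t) - 1) - a * (Real.log a - 1)))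
        ≤ ε * (t * Real.log t - t - t * Real.log (a/2)) :=
      mul_le_mul_of_nonneg_left hE hε.le
    have hA : α/n * ((t * C i j - t * C i1 j)
        + ε * ((t * (Real.log t - 1))
          + ((a - t) * (Real.log (a - t) - 1) - a * (Real.log a - 1))))
        ≤ α/n * ((t * C i j - t * C i1 j)
          + ε * (t * Real.log t - t - t * Real.log (a/2))) :=
      mul_le_mul_of_nonneg_left (by linarith) hc1
    have hB : (1-α) * ((((r0+t)/n) * Real.log (((r0+t)/n) / z i) - (r0+t)/n
            - ((r0/n) * Real.log ((r0/n) / z i) - r0/n))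
          + (((r1-t)/n) * Real.log (((r1-t)/n) / z i1) - (r1-t)/n
            - ((r1/n) * Real.log ((r1/n) / z i1) - r1/n)))
        ≤ (1-α) * (t/n * (Real.log 2 - Real.log (z i))
          + t/n * (Real.log (z i1) - Real.log (a/(2*n)))) :=
      mul_le_mul_of_nonneg_left (by linarith) hc2
    have hfin : α/n * ((t * C i j - t * C i1 j)
          + ε * (t * Real.log t - t - t * Real.log (a/2)))
        + (1-α) * (t/n * (Real.log 2 - Real.log (z i))
          + t/n * (Real.log (z i1) - Real.log (a/(2*n))))
        = t * ((α*ε/n) * Real.log t + M) := by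
      rw [hMdef]; ring
    linarith
  have hMlog : (α*ε/n) * Real.log t + M ≤ -1 := by
    have hc : (0:ℝ) < α*ε/n := by positivity
    have h1 := mul_le_mul_of_nonneg_left hlogt hc.le
    have h2 : (α*ε/n) * (-(M+1)*n/(α*ε)) = -(M+1) := by
      field_simp
    linarith
  have h3 : t * ((α*ε/n) * Real.log t + M) ≤ t * (-1) :=
    mul_le_mul_of_nonneg_left hMlog ht0.le
  have hVfeas : V ∈ colSimplexSet K n := ⟨hVpos, hVcol⟩
  have hmin := hUmin V hVfeas
  have : t * (-1) < 0 := by linarith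
  linarith
end

section
/- Let K = 2, n ≥ 1, let f_1,…,f_n ∈ Δ_2 have strictly positive entries, let 0 ≤ α ≤ 1, and let d : Δ_2 × Δ_2 → ℝ be any function. For an assignment t ∈ {1,2}^n define the combinatorial objective J(t) = -(α/n) Σ_{j=1}^n log (f_j)_{t_j} + (1-α) d((1/n) Σ_{j=1}^n e(t_j), z), where z ∈ Δ_2 is fixed. Then there exists a minimizer t* of J over {1,2}^n that is a threshold assignment with respect to the values (f_j)_2: for all indices j, j′, if t*_j = 2 and t*_{j′} = 1 then (f_j)_2 ≥ (f_{j′})_2. Equivalently, for some m ∈ {0,1,…,n}, t* assigns class 2 to m indices with the m largest values of (f_j)_2 - (f_j)_1 and class 1 to the rest. -/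
/-- One-hot encoding of a class `i ∈ {1,2}` (represented by `Fin 2`,
with class 1 ↦ `0` and class 2 ↦ `1`). -/
noncomputable def oneHot2 (i : Fin 2) : Fin 2 → ℝ := fun k => if k = i then 1 else 0

/-- The combinatorial bag objective in the binary case:
`J(t) = -(α/n) ∑_j log (f_j)_{t_j} + (1-α) d((1/n) ∑_j e(t_j), z)`. -/
noncomputable def binObj {n : ℕ} (f : Fin n → Fin 2 → ℝ) (z : Fin 2 → ℝ)
    (α : ℝ) (d : (Fin 2 → ℝ) → (Fin 2 → ℝ) → ℝ) (t : Fin n → Fin 2) : ℝ :=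
  -(α / n) * ∑ j, Real.log (f j (t j))
    + (1 - α) * d (fun k => (∑ j, oneHot2 (t j) k) / n) z

/-- In the binary classification case, the combinatorial bag objective admits a
minimizer which is a threshold assignment with respect to the values `(f_j)_2`:
whenever `t* j` is class 2 (`1 : Fin 2`) and `t* j'` is class 1 (`0 : Fin 2`),
one has `(f_{j'})_2 ≤ (f_j)_2`. -/
theorem binary_threshold_minimizer
    {n : ℕ} (hn : 1 ≤ n)
    (f : Fin n → Fin 2 → ℝ)
    (hfpos : ∀ j k, 0 < f j k) (hfsum : ∀ j, f j 0 + f j 1 = 1)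
    (z : Fin 2 → ℝ) (hznn : ∀ k, 0 ≤ z k) (hzsum : z 0 + z 1 = 1)
    (α : ℝ) (hα0 : 0 ≤ α) (hα1 : α ≤ 1)
    (d : (Fin 2 → ℝ) → (Fin 2 → ℝ) → ℝ) :
    ∃ tstar : Fin n → Fin 2,
      (∀ t : Fin n → Fin 2, binObj f z α d tstar ≤ binObj f z α d t) ∧
      ∀ j j' : Fin n, tstar j = 1 → tstar j' = 0 → f j' 1 ≤ f j 1 := by
  classical
  obtain ⟨t0, -, ht0⟩ := Finset.exists_min_image Finset.univ (binObj f z α d)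
    ⟨fun _ => 0, Finset.mem_univ _⟩
  set S : Finset (Fin n → Fin 2) :=
    Finset.univ.filter (fun t => binObj f z α d t ≤ binObj f z α d t0) with hS
  obtain ⟨t, htS, htmax⟩ := Finset.exists_max_image S
    (fun t => ∑ i, Real.log (f i (t i))) ⟨t0, by simp [hS]⟩
  have htle : binObj f z α d t ≤ binObj f z α d t0 := by
    simpa [hS] using htS
  refine ⟨t, fun s => le_trans htle (ht0 s (Finset.mem_univ s)), ?_⟩
  intro j j' hj hj'
  by_contra hlt
  push_neg at hlt
  have hne : j ≠ j' := by
    rintro rfl; rw [hj] at hj'; exact absurd hj' (by decide)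
  set t' := Function.update (Function.update t j 0) j' 1 with ht'
  have h1 : t' j = 0 := by
    simp [ht', Function.update_apply, hne]
  have h2 : t' j' = 1 := by simp [ht']
  have hoff : ∀ i, i ≠ j → i ≠ j' → t' i = t i := by
    intro i hij hij'
    simp [ht', Function.update_apply, hij, hij']
  have key : ∀ g : Fin n → Fin 2 → ℝ,
      ∑ i, g i (t' i) = ∑ i, g i (t i) + ((g j 0 - g j 1) + (g j' 1 - g j' 0)) := by
    intro g
    have h : ∑ i, (g i (t' i) - g i (t i))
        = ∑ i ∈ ({j, j'} : Finset (Fin n)), (g i (t' i) - g i (t i)) := by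
      refine (Finset.sum_subset (Finset.subset_univ _) ?_).symm
      intro i _ hi
      simp only [Finset.mem_insert, Finset.mem_singleton] at hi
      push_neg at hi
      rw [hoff i hi.1 hi.2]; ring
    rw [Finset.sum_pair hne, h1, h2, hj, hj'] at h
    have hs : ∑ i, (g i (t' i) - g i (t i))
        = ∑ i, g i (t' i) - ∑ i, g i (t i) := Finset.sum_sub_distrib _ _
    linarith [hs ▸ h]
  have hcount : (fun k => (∑ i, oneHot2 (t' i) k) / (n : ℝ))
      = fun k => (∑ i, oneHot2 (t i) k) / (n : ℝ) := by
    funext k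
    rw [key (fun _ x => oneHot2 x k)]
    ring
  have hL := key (fun i x => Real.log (f i x))
  have hΔ : 0 < (Real.log (f j 0) - Real.log (f j 1))
      + (Real.log (f j' 1) - Real.log (f j' 0)) := by
    have l1 : Real.log (f j 1) < Real.log (f j' 1) :=
      Real.log_lt_log (hfpos j 1) hlt
    have l2 : Real.log (f j' 0) < Real.log (f j 0) := by
      refine Real.log_lt_log (hfpos j' 0) ?_
      have := hfsum j; have := hfsum j'; linarith
    linarith
  have ht'le : binObj f z α d t' ≤ binObj f z α d t := by
    unfold binObj
    rw [hcount, hL]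
    have hα' : 0 ≤ α / n := div_nonneg hα0 (Nat.cast_nonneg n)
    nlinarith [mul_nonneg hα' hΔ.le]
  have ht'S : t' ∈ S := by
    simp only [hS, Finset.mem_filter, Finset.mem_univ, true_and]
    exact le_trans ht'le htle
  have := htmax t' ht'S
  rw [hL] at this
  linarith
end
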